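/- If A, B, C, D are square matrices of the same size over a commutative ring that pairwise commute, then the determinant of the block matrix [[A, B], [C, D]] equals det(AD - BC). -/
import Mathlib

open Matrix Polynomial

theorem stmt_0 {R n : Type*} [CommRing R] [Fintype n] [DecidableEq n]
    (A B C D : Matrix n n R)
    (hAB : A * B = B * A) (hAC : A * C = C * A) (hAD : A * D = D * A)
    (hBC : B * C = C * B) (hBD : B * D = D * B) (hCD : C * D = D * C) :
    (Matrix.fromBlocks A B C D).det = (A * D - B * C).det := by
  -- work over R[X]
  let f : R →+* R[X] := Polynomial.C
  let A' := A.map f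
  let B' := B.map f
  let C' := C.map f
  let D' := charmatrix (-D)
  have hD' : D' = D.map f + (X : R[X]) • 1 := by
    ext i j
    by_cases h : i = j <;>
      simp [D', charmatrix_apply, Matrix.one_apply, Matrix.diagonal_apply, f, h] <;> ring
  have hC'D' : C' * D' = D' * C' := by
    rw [hD', Matrix.mul_add, Matrix.add_mul]
    congr 1
    · simp only [C', ← Matrix.map_mul, hCD]
    · simp [mul_smul_comm, smul_mul_assoc]
  have key : (fromBlocks A' B' C' D') * (fromBlocks D' 0 (-C') 1)
      = fromBlocks (A' * D' - B' * C') B' 0 D' := by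
    rw [fromBlocks_multiply]
    congr 1 <;> simp [Matrix.mul_neg, sub_eq_add_neg, hC'D']
  have hdetD' : (D').det = (-D).charpoly := rfl
  have hmonic : IsRegular ((D').det) := by
    rw [hdetD']; exact (Matrix.charpoly_monic _).isRegular
  have hdet : (fromBlocks A' B' C' D').det * (D').det
      = (A' * D' - B' * C').det * (D').det := by
    have := congrArg Matrix.det key
    rwa [det_mul, det_fromBlocks_zero₁₂, det_one, mul_one, det_fromBlocks_zero₂₁] at this
  have heq : (fromBlocks A' B' C' D').det = (A' * D' - B' * C').det :=
    hmonic.right hdet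
  -- evaluate at 0
  have := congrArg (Polynomial.eval 0) heq
  have hev : ∀ (m : Type _) [Fintype m] [DecidableEq m] (M : Matrix m m R[X]),
      Polynomial.eval 0 M.det = (M.map (Polynomial.evalRingHom (0:R))).det := by
    intro m _ _ M
    exact RingHom.map_det (Polynomial.evalRingHom (0:R)) M
  rw [hev _, hev _] at this
  have hmap : ∀ M : Matrix n n R, (M.map f).map (Polynomial.evalRingHom (0:R)) = M := by
    intro M; ext i j; simp [f]
  have hDmap : (D').map (Polynomial.evalRingHom (0:R)) = D := by
    rw [hD']
    ext i j
    simp [Matrix.map_apply, Matrix.add_apply, Matrix.smul_apply, f]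
  rwa [Matrix.map_sub _ fun a b => map_sub _ a b, Matrix.map_mul, Matrix.map_mul, fromBlocks_map,
    hmap, hmap, hmap, hDmap] at this
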